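/- arXiv:2007.15988 — 3 statements merged into one kernel-verified Lean document; each statement's English description precedes it below -/
import Mathlib

section
/- Let E be a real symmetric positive definite N×N matrix and A a real N×N matrix with −(A + A^T) positive semidefinite. If x : ℝ → ℝ^N is differentiable and satisfies the descriptor system E x′(t) = A x(t) for all t, then the energy t ↦ x(t)^T E x(t) is non-increasing in t. That is, the unperturbed linear network model is energy-dissipating. -/
open Matrix

lemma hasDerivAt_quad {N : ℕ} (M : Matrix (Fin N) (Fin N) ℝ)
    (x : ℝ → (Fin N → ℝ)) (hx : Differentiable ℝ x) (t : ℝ) :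
    HasDerivAt (fun t : ℝ => x t ⬝ᵥ M.mulVec (x t))
      (deriv x t ⬝ᵥ M.mulVec (x t) + x t ⬝ᵥ M.mulVec (deriv x t)) t := by
  have hxd : HasDerivAt x (deriv x t) t := (hx t).hasDerivAt
  have hi : ∀ i, HasDerivAt (fun s => x s i) (deriv x t i) t :=
    hasDerivAt_pi.1 hxd
  have hinner : ∀ i, HasDerivAt (fun s => (∑ j, M i j * x s j))
      (∑ j, M i j * deriv x t j) t := fun i =>
    HasDerivAt.fun_sum fun j _ => (hi j).const_mul (M i j)
  have h : HasDerivAt (fun s => ∑ i, x s i * ∑ j, M i j * x s j)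
      (∑ i, (deriv x t i * (∑ j, M i j * x t j) + x t i * ∑ j, M i j * deriv x t j)) t :=
    HasDerivAt.fun_sum fun i _ => (hi i).mul (hinner i)
  convert h using 1
  simp [dotProduct, mulVec, Finset.sum_add_distrib]
  rw [Finset.sum_add_distrib]; rfl

/-- The unperturbed linear descriptor system E ẋ = A x with E symmetric
positive definite and −(A + Aᵀ) positive semidefinite is energy-dissipating:
the energy t ↦ x(t)ᵀ E x(t) is non-increasing. -/
theorem descriptor_system_energy_dissipating {N : ℕ}
    (E A : Matrix (Fin N) (Fin N) ℝ)
    (hE : E.PosDef) (hA : (-(A + Aᵀ)).PosSemidef)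
    (x : ℝ → (Fin N → ℝ)) (hx : Differentiable ℝ x)
    (hode : ∀ t : ℝ, E.mulVec (deriv x t) = A.mulVec (x t)) :
    Antitone (fun t : ℝ => x t ⬝ᵥ E.mulVec (x t)) := by
  have hEsymm : Eᵀ = E := hE.isHermitian
  have hkey : ∀ t, HasDerivAt (fun t : ℝ => x t ⬝ᵥ E.mulVec (x t))
      (2 * (x t ⬝ᵥ A.mulVec (x t))) t := by
    intro t
    have h := hasDerivAt_quad E x hx t
    have h1 : deriv x t ⬝ᵥ E.mulVec (x t) = x t ⬝ᵥ A.mulVec (x t) := by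
      rw [dotProduct_mulVec, ← mulVec_transpose, hEsymm, hode, dotProduct_comm]
    have h2 : x t ⬝ᵥ E.mulVec (deriv x t) = x t ⬝ᵥ A.mulVec (x t) := by
      rw [hode]
    rw [h1, h2] at h
    convert h using 1
    ring
  have hdiff : Differentiable ℝ (fun t : ℝ => x t ⬝ᵥ E.mulVec (x t)) :=
    fun t => (hkey t).differentiableAt
  apply antitone_of_deriv_nonpos hdiff
  intro t
  rw [(hkey t).deriv]
  have hA' := hA.dotProduct_mulVec_nonneg (x t)
  have hAT : x t ⬝ᵥ Aᵀ.mulVec (x t) = x t ⬝ᵥ A.mulVec (x t) := by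
    rw [dotProduct_mulVec, ← mulVec_transpose, transpose_transpose, dotProduct_comm]
  simp only [star_trivial, neg_mulVec, add_mulVec, dotProduct_neg, dotProduct_add, hAT] at hA'
  linarith
end

section
/- Let E be a real symmetric positive definite N×N matrix, A a real N×N matrix with −(A + A^T) positive semidefinite, and V a real N×n matrix with linearly independent columns. Set Ê = V^T E V and = V^T A V. If x̂ : ℝ → ℝ^n is differentiable and satisfies Ê x̂′(t) = x̂(t) for all t, then the reduced energy t ↦ x̂(t)^T Ê x̂(t) is non-increasing in t. That is, the Galerkin-projected reduced-order model is again energy-dissipating. -/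
open Matrix

lemma hasDerivAt_quadform {n : ℕ} (M : Matrix (Fin n) (Fin n) ℝ)
    (x : ℝ → (Fin n → ℝ)) (x' : Fin n → ℝ) (t : ℝ) (hx : HasDerivAt x x' t) :
    HasDerivAt (fun s => x s ⬝ᵥ M.mulVec (x s))
      (x' ⬝ᵥ M.mulVec (x t) + x t ⬝ᵥ M.mulVec x') t := by
  have hxi : ∀ i, HasDerivAt (fun s => x s i) (x' i) t := fun i =>
    (hasDerivAt_pi.mp hx) i
  have key : HasDerivAt (fun s => ∑ i, ∑ j, x s i * (M i j * x s j))
      (∑ i, ∑ j, (x' i * (M i j * x t j) + x t i * (M i j * x' j))) t := by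
    refine HasDerivAt.fun_sum fun i _ => HasDerivAt.fun_sum fun j _ => ?_
    exact (hxi i).mul ((hxi j).const_mul (M i j))
  have heq : (fun s => x s ⬝ᵥ M.mulVec (x s))
      = fun s => ∑ i, ∑ j, x s i * (M i j * x s j) := by
    funext s
    simp [dotProduct, mulVec, Finset.mul_sum]
  have hd : (x' ⬝ᵥ M.mulVec (x t) + x t ⬝ᵥ M.mulVec x')
      = ∑ i, ∑ j, (x' i * (M i j * x t j) + x t i * (M i j * x' j)) := by
    simp [dotProduct, mulVec, Finset.mul_sum, Finset.sum_add_distrib]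
  rw [heq, hd]
  exact key

lemma quadform_transpose {n : ℕ} (M : Matrix (Fin n) (Fin n) ℝ) (x : Fin n → ℝ) :
    x ⬝ᵥ Mᵀ.mulVec x = x ⬝ᵥ M.mulVec x := by
  rw [mulVec_transpose, dotProduct_comm, ← dotProduct_mulVec]

/-- The Galerkin-projected reduced-order model Ê x̂′ = Â x̂ with
Ê = Vᵀ E V and Â = Vᵀ A V is again energy-dissipating: the reduced energy
t ↦ x̂(t)ᵀ Ê x̂(t) is non-increasing. -/
theorem reduced_descriptor_system_energy_dissipating {N n : ℕ}
    (E A : Matrix (Fin N) (Fin N) ℝ)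
    (hE : E.PosDef) (hA : (-(A + Aᵀ)).PosSemidef)
    (V : Matrix (Fin N) (Fin n) ℝ) (hV : Function.Injective V.mulVec)
    (xhat : ℝ → (Fin n → ℝ)) (hx : Differentiable ℝ xhat)
    (hode : ∀ t : ℝ,
      (Vᵀ * E * V).mulVec (deriv xhat t) = (Vᵀ * A * V).mulVec (xhat t)) :
    Antitone (fun t : ℝ => xhat t ⬝ᵥ (Vᵀ * E * V).mulVec (xhat t)) := by
  have hEsym : (Vᵀ * E * V)ᵀ = Vᵀ * E * V := by
    have hEt : Eᵀ = E := by
      rw [← Matrix.conjTranspose_eq_transpose_of_trivial]; exact hE.isHermitian.eq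
    rw [Matrix.transpose_mul, Matrix.transpose_mul, Matrix.transpose_transpose,
      hEt, Matrix.mul_assoc]
  have hderiv : ∀ t, HasDerivAt (fun s => xhat s ⬝ᵥ (Vᵀ * E * V).mulVec (xhat s))
      (deriv xhat t ⬝ᵥ (Vᵀ * E * V).mulVec (xhat t)
        + xhat t ⬝ᵥ (Vᵀ * E * V).mulVec (deriv xhat t)) t :=
    fun t => hasDerivAt_quadform _ xhat _ t (hx t).hasDerivAt
  apply antitone_of_deriv_nonpos
  · exact fun t => ((hderiv t).differentiableAt)
  · intro t
    rw [(hderiv t).deriv]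
    have h1 : deriv xhat t ⬝ᵥ (Vᵀ * E * V).mulVec (xhat t)
        = xhat t ⬝ᵥ (Vᵀ * E * V).mulVec (deriv xhat t) := by
      rw [dotProduct_mulVec, dotProduct_comm, ← mulVec_transpose, hEsym]
    rw [h1, ← two_mul, hode t]
    have hps := hA.conjTranspose_mul_mul_same V
    have h2 := hps.dotProduct_mulVec_nonneg (xhat t)
    have htr : Vᴴ = Vᵀ := Matrix.conjTranspose_eq_transpose_of_trivial V
    rw [htr] at h2
    have hexp : Vᵀ * -(A + Aᵀ) * V = -(Vᵀ * A * V) - (Vᵀ * A * V)ᵀ := by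
      rw [Matrix.transpose_mul, Matrix.transpose_mul, Matrix.transpose_transpose]
      simp only [Matrix.neg_mul, Matrix.mul_neg, Matrix.mul_add, Matrix.add_mul,
        Matrix.mul_assoc]
      abel
    rw [hexp] at h2
    have h3 : xhat t ⬝ᵥ (Vᵀ * A * V)ᵀ.mulVec (xhat t)
        = xhat t ⬝ᵥ (Vᵀ * A * V).mulVec (xhat t) := quadform_transpose _ _
    simp only [sub_mulVec, neg_mulVec, dotProduct_sub, dotProduct_neg, star_trivial] at h2
    rw [h3] at h2
    linarith
end

section
/- Let E be a real symmetric positive definite N×N matrix, A a real N×N matrix with −(A + A^T) positive semidefinite, τ > 0, and θ ∈ [1/2, 1]. If x_k, x_{k+1} ∈ ℝ^N satisfy the θ-scheme step (E − τθA) x_{k+1} = (E + τ(1−θ)A) x_k, then x_{k+1}^T E x_{k+1} ≤ x_k^T E x_k. That is, for θ ≥ 1/2 the θ-scheme time discretization preserves the energy dissipation of the dissipative descriptor system. -/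
open Matrix

/-- For θ ∈ [1/2, 1] the θ-scheme time discretization preserves the energy
dissipation of the dissipative descriptor system: if
(E − τθA) x_{k+1} = (E + τ(1−θ)A) x_k, then the discrete energy decreases. -/
theorem theta_scheme_energy_dissipating {N : ℕ}
    (E A : Matrix (Fin N) (Fin N) ℝ)
    (hE : E.PosDef) (hA : (-(A + Aᵀ)).PosSemidef)
    (τ θ : ℝ) (hτ : 0 < τ) (hθ : θ ∈ Set.Icc (1/2 : ℝ) 1)
    (xk xk1 : Fin N → ℝ)
    (hstep : (E - (τ * θ) • A).mulVec xk1 = (E + (τ * (1 - θ)) • A).mulVec xk) :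
    xk1 ⬝ᵥ E.mulVec xk1 ≤ xk ⬝ᵥ E.mulVec xk := by
  obtain ⟨hθ1, hθ2⟩ := hθ
  set d : Fin N → ℝ := xk1 - xk with hd
  set y : Fin N → ℝ := θ • xk1 + (1 - θ) • xk with hy
  have hEt : Eᵀ = E := hE.1
  have hsym : ∀ u v : Fin N → ℝ, u ⬝ᵥ E.mulVec v = v ⬝ᵥ E.mulVec u := by
    intro u v
    rw [Matrix.dotProduct_mulVec, ← Matrix.mulVec_transpose, hEt, dotProduct_comm]
  -- key relation: E d = τ • A y
  have hEd : E.mulVec d = τ • A.mulVec y := by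
    funext i
    have h := congrFun hstep i
    simp only [Matrix.sub_mulVec, Matrix.add_mulVec, Matrix.smul_mulVec,
      Pi.sub_apply, Pi.add_apply, Pi.smul_apply, smul_eq_mul] at h
    simp only [hd, hy, Matrix.mulVec_sub, Matrix.mulVec_add, Matrix.mulVec_smul,
      Pi.sub_apply, Pi.add_apply, Pi.smul_apply, smul_eq_mul]
    ring_nf
    ring_nf at h
    linarith
  -- positivity facts
  have h1 : 0 ≤ d ⬝ᵥ E.mulVec d := by
    have := hE.posSemidef.dotProduct_mulVec_nonneg d
    simpa using this
  have h2 : y ⬝ᵥ A.mulVec y ≤ 0 := by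
    have := hA.dotProduct_mulVec_nonneg y
    simp only [Matrix.neg_mulVec, Matrix.add_mulVec, dotProduct_neg,
      dotProduct_add, RCLike.re_to_real, star_trivial] at this
    have hyA : y ⬝ᵥ Aᵀ.mulVec y = y ⬝ᵥ A.mulVec y := by
      rw [Matrix.dotProduct_mulVec, ← Matrix.mulVec_transpose, Matrix.transpose_transpose,
        dotProduct_comm]
    linarith
  -- the main algebraic identity
  have hyd : y ⬝ᵥ E.mulVec d = τ * (y ⬝ᵥ A.mulVec y) := by
    rw [hEd, dotProduct_smul, smul_eq_mul]
  have expand_yd : y ⬝ᵥ E.mulVec d =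
      θ * (xk1 ⬝ᵥ E.mulVec xk1) - θ * (xk1 ⬝ᵥ E.mulVec xk)
      + (1 - θ) * (xk1 ⬝ᵥ E.mulVec xk) - (1 - θ) * (xk ⬝ᵥ E.mulVec xk) := by
    simp only [hy, hd, Matrix.mulVec_sub, add_dotProduct, smul_dotProduct,
      dotProduct_sub, smul_eq_mul]
    rw [hsym xk xk1]
    ring
  have expand_dd : d ⬝ᵥ E.mulVec d =
      (xk1 ⬝ᵥ E.mulVec xk1) - 2 * (xk1 ⬝ᵥ E.mulVec xk) + (xk ⬝ᵥ E.mulVec xk) := by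
    simp only [hd, Matrix.mulVec_sub, sub_dotProduct, dotProduct_sub]
    rw [hsym xk xk1]
    ring
  have hτyAy : τ * (y ⬝ᵥ A.mulVec y) ≤ 0 :=
    mul_nonpos_of_nonneg_of_nonpos hτ.le h2
  nlinarith [mul_nonneg (by linarith : (0:ℝ) ≤ 2*θ - 1) h1, hyd, expand_yd, expand_dd]
end
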